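/- arXiv:1009.5106 — 2 statements merged into one kernel-verified Lean document; each statement's English description precedes it below -/
import Mathlib

section
/- The cyclic sequence 1,(2,3,...,n) repeated (n-2) times, followed by 2 — i.e. the cycle 1,2,...,n,2,...,n,...,2,...,n,2 of length (n-1)(n-2)+2 — contains every permutation of {1,2,...,n} as a subsequence of some rotation of the cycle. Hence r(n) ≤ n² - 3n + 4. -/
/-- A cycle `c` of elements of `{1,...,n}` is a rosary of degree `n` if every
permutation of `{1,...,n}` occurs as a subsequence of some rotation of `c`. -/
def IsRosary (n : ℕ) (c : List ℕ) : Prop :=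
  (∀ x ∈ c, 1 ≤ x ∧ x ≤ n) ∧
  ∀ p : List ℕ, p.Perm (List.range' 1 n) → ∃ j, p.Sublist (c.rotate j)

/-- `rosaryNumber n` is the minimal length of a rosary of degree `n`. -/
noncomputable def rosaryNumber (n : ℕ) : ℕ :=
  sInf {r | ∃ c : List ℕ, c.length = r ∧ IsRosary n c}

namespace GuptaAux

/-- `m` copies of the block `2,3,...,n`, concatenated. -/
def blocks (n m : ℕ) : List ℕ := (List.replicate m (List.range' 2 (n - 1))).flatten

lemma blocks_add (n u v : ℕ) : blocks n (u + v) = blocks n u ++ blocks n v := by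
  unfold blocks
  rw [List.replicate_add, List.flatten_append]

lemma blocks_length (n m : ℕ) : (blocks n m).length = m * (n - 1) := by
  unfold blocks
  simp [List.length_flatten, List.map_replicate, List.sum_replicate, smul_eq_mul]

lemma mem_block {n x : ℕ} (h2 : 2 ≤ x) (hn : x ≤ n) : x ∈ List.range' 2 (n - 1) := by
  rw [List.mem_range'_1]
  omega

/-- Any list with entries in `[2,n]` embeds in as many blocks as its length. -/
lemma sublist_blocks (n : ℕ) : ∀ q : List ℕ, (∀ x ∈ q, 2 ≤ x ∧ x ≤ n) →
    q.Sublist (blocks n q.length) := by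
  intro q
  induction q with
  | nil => intro _; simp
  | cons x t ih =>
    intro h
    have hx := h x (by simp)
    have ht : t.Sublist (blocks n t.length) := ih fun y hy => h y (by simp [hy])
    have hb : blocks n (x :: t).length = List.range' 2 (n - 1) ++ blocks n t.length := by
      have h1 : (x :: t).length = 1 + t.length := by rw [List.length_cons, Nat.add_comm]
      rw [h1, blocks_add]
      unfold blocks; simp
    rw [hb]
    exact List.Sublist.append (List.singleton_sublist.2 (mem_block hx.1 hx.2)) ht

/-- The block `2,...,n` is `2` followed by `3,...,n`. -/
lemma block_eq (n : ℕ) (hn : 2 ≤ n) :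
    List.range' 2 (n - 1) = 2 :: List.range' 3 (n - 2) := by
  have : n - 1 = (n - 2) + 1 := by omega
  rw [this, List.range'_succ]

/-- A nodup list with entries in `[2,n]` containing `2` embeds in
`length - 1` blocks followed by a single `2`. -/
lemma sublist_blocks_two (n : ℕ) : ∀ q : List ℕ, q.Nodup →
    (∀ x ∈ q, 2 ≤ x ∧ x ≤ n) → 2 ∈ q →
    q.Sublist (blocks n (q.length - 1) ++ [2]) := by
  intro q
  induction q with
  | nil => intro _ _ h; simp at h
  | cons x t ih =>
    intro hnd hb h2
    have hx := hb x (by simp)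
    have hbt : ∀ y ∈ t, 2 ≤ y ∧ y ≤ n := fun y hy => hb y (by simp [hy])
    rcases eq_or_ne x 2 with rfl | hx2
    · -- head is 2; remaining elements are ≥ 3
      have h2t : 2 ∉ t := (List.nodup_cons.1 hnd).1
      cases t with
      | nil => simp [blocks]
      | cons y t' =>
        have hy := hbt y (by simp)
        have hy3 : 3 ≤ y := by
          rcases eq_or_ne y 2 with rfl | hy2
          · exact absurd (by simp) h2t
          · omega
        have hn3 : 3 ≤ n := le_trans hy3 hy.2
        have hlen : (2 :: y :: t').length - 1 = 1 + t'.length := by simp; omega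
        rw [hlen, blocks_add]
        have hb1 : blocks n 1 = 2 :: List.range' 3 (n - 2) := by
          unfold blocks; simp [block_eq n (by omega)]
        rw [hb1]
        have ht' : t'.Sublist (blocks n t'.length) :=
          sublist_blocks n t' (fun z hz => hbt z (by simp [hz]))
        have hyt' : (y :: t').Sublist (List.range' 3 (n - 2) ++ (blocks n t'.length ++ [2])) := by
          have hymem : y ∈ List.range' 3 (n - 2) := by
            rw [List.mem_range'_1]; omega
          exact List.Sublist.append (List.singleton_sublist.2 hymem)
            (ht'.trans (List.sublist_append_left _ _))
        simpa using List.Sublist.cons₂ 2 hyt'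
    · -- head is > 2, so 2 is in the tail
      have h2t : 2 ∈ t := by
        rcases List.mem_cons.1 h2 with h | h
        · exact absurd h.symm hx2
        · exact h
      have htne : t ≠ [] := by rintro rfl; simp at h2t
      have ih' : t.Sublist (blocks n (t.length - 1) ++ [2]) :=
        ih (List.nodup_cons.1 hnd).2 hbt h2t
      have hlen : (x :: t).length - 1 = 1 + (t.length - 1) := by
        cases t with
        | nil => exact absurd rfl htne
        | cons z t' => simp; omega
      rw [hlen, blocks_add]
      have hb1 : blocks n 1 = List.range' 2 (n - 1) := by unfold blocks; simp
      rw [hb1]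
      rw [List.append_assoc]
      exact List.Sublist.append (l₁ := [x]) (List.singleton_sublist.2 (mem_block hx.1 hx.2)) ih'

end GuptaAux

open GuptaAux in
theorem gupta_trivial_bound (n : ℕ) (hn : 1 < n) :
    IsRosary n (1 :: ((List.replicate (n - 2) (List.range' 2 (n - 1))).flatten ++ [2])) ∧
    rosaryNumber n ≤ n ^ 2 + 4 - 3 * n := by
  set c : List ℕ := 1 :: ((List.replicate (n - 2) (List.range' 2 (n - 1))).flatten ++ [2]) with hc
  have hc' : c = [1] ++ blocks n (n - 2) ++ [2] := by simp [hc, blocks]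
  have hros : IsRosary n c := by
    constructor
    · intro x hx
      rw [hc'] at hx
      simp only [List.mem_append, List.mem_singleton] at hx
      rcases hx with (h | h) | h
      · omega
      · have : x ∈ List.range' 2 (n - 1) := by
          unfold blocks at h
          rcases List.mem_flatten.1 h with ⟨l, hl, hxl⟩
          rw [List.eq_of_mem_replicate hl] at hxl
          exact hxl
        rw [List.mem_range'_1] at this
        omega
      · omega
    · intro p hp
      -- basic facts about p
      have hmem : ∀ x, x ∈ p ↔ (1 ≤ x ∧ x < 1 + n) := by
        intro x
        rw [hp.mem_iff, List.mem_range'_1]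
      have h1p : 1 ∈ p := (hmem 1).2 ⟨le_refl 1, by omega⟩
      obtain ⟨a, b, rfl⟩ : ∃ a b, p = a ++ 1 :: b := by
        obtain ⟨s, t, hst⟩ := List.append_of_mem h1p
        exact ⟨s, t, hst⟩
      have hnd : (a ++ 1 :: b).Nodup := hp.nodup_iff.2 List.nodup_range'
      have h1a : 1 ∉ a := by
        intro h
        exact (List.disjoint_of_nodup_append hnd) h (by simp)
      have h1b : 1 ∉ b := by
        have := (List.nodup_append.1 hnd).2.1
        exact (List.nodup_cons.1 this).1
      have hba : ∀ x ∈ a, 2 ≤ x ∧ x ≤ n := by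
        intro x hx
        have h1 := (hmem x).1 (by simp [hx])
        have : x ≠ 1 := by rintro rfl; exact h1a hx
        omega
      have hbb : ∀ x ∈ b, 2 ≤ x ∧ x ≤ n := by
        intro x hx
        have h1 := (hmem x).1 (by simp [hx])
        have : x ≠ 1 := by rintro rfl; exact h1b hx
        omega
      have hlen : a.length + b.length + 1 = n := by
        have := hp.length_eq
        simp [List.length_range'] at this
        omega
      have hnda : a.Nodup := (List.nodup_append.1 hnd).1
      have hndb : b.Nodup := (List.nodup_cons.1 (List.nodup_append.1 hnd).2.1).2
      have h2p : 2 ∈ a ++ 1 :: b := (hmem 2).2 ⟨by omega, by omega⟩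
      have h2ab : 2 ∈ a ∨ 2 ∈ b := by
        simp only [List.mem_append, List.mem_cons] at h2p
        rcases h2p with h | h | h
        · exact Or.inl h
        · omega
        · exact Or.inr h
      cases a with
      | nil =>
        -- rotation 0 : c itself
        refine ⟨0, ?_⟩
        rw [List.rotate_zero, hc']
        have h2b : 2 ∈ b := by
          rcases h2ab with h | h
          · simp at h
          · exact h
        have hbl : b.length - 1 = n - 2 := by
          simp only [List.length_nil] at hlen; omega
        have : b.Sublist (blocks n (n - 2) ++ [2]) := by
          rw [← hbl]
          exact sublist_blocks_two n b hndb hbb h2b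
        simpa using List.Sublist.cons₂ 1 this
      | cons x a' =>
        have hxa := hba x (by simp)
        rcases h2ab with h2a | h2b
        · -- Family I : rotation  blocks u ++ [2] ++ [1] ++ blocks s,  u = |a|-1, s = |b|
          set u := a'.length with hu
          set s := b.length with hs
          have hsplit : n - 2 = s + u := by simp at hlen; omega
          refine ⟨1 + s * (n - 1), ?_⟩
          have hdecomp : c = ([1] ++ blocks n s) ++ (blocks n u ++ [2]) := by
            rw [hc', hsplit, blocks_add]; simp
          have hlenfst : ([1] ++ blocks n s).length = 1 + s * (n - 1) := by
            simp [blocks_length]; ring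
          have hrot : c.rotate (1 + s * (n - 1)) =
              (blocks n u ++ [2]) ++ ([1] ++ blocks n s) := by
            rw [hdecomp, ← hlenfst, List.rotate_append_length_eq]
          rw [hrot]
          have hasub : (x :: a').Sublist (blocks n u ++ [2]) := by
            have := sublist_blocks_two n (x :: a') hnda hba h2a
            simpa [hu] using this
          have hbsub : b.Sublist (blocks n s) := by
            rw [hs]; exact sublist_blocks n b hbb
          have : ((x :: a') ++ (1 :: b)).Sublist
              ((blocks n u ++ [2]) ++ (1 :: blocks n s)) :=
            List.Sublist.append hasub (List.Sublist.cons₂ 1 hbsub)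
          simpa using this
        · -- Family II
          have hx3 : 3 ≤ x := by
            rcases eq_or_ne x 2 with rfl | hx2
            · exfalso
              have : (2 :: a').Nodup := hnda
              have h2a' : 2 ∉ a' := (List.nodup_cons.1 this).1
              -- x = 2 means 2 ∈ a and 2 ∈ b contradicts nodup
              exact List.disjoint_of_nodup_append hnd List.mem_cons_self
                (List.mem_cons_of_mem 1 h2b)
            · omega
          have hn3 : 3 ≤ n := le_trans hx3 hxa.2
          have hbne : b ≠ [] := by rintro rfl; simp at h2b
          set u := a'.length with hu
          set s := b.length - 1 with hs
          have hbl : b.length = s + 1 := by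
            cases b with
            | nil => simp at hbne
            | cons z b' => simp [hs]
          have hsplit : n - 2 = s + (1 + u) := by simp at hlen; omega
          refine ⟨s * (n - 1) + 2, ?_⟩
          have hb1 : blocks n 1 = 2 :: List.range' 3 (n - 2) := by
            unfold blocks; simp [block_eq n (by omega)]
          have hbsplit : blocks n (n - 2) =
              blocks n s ++ ((2 :: List.range' 3 (n - 2)) ++ blocks n u) := by
            conv_lhs => rw [hsplit]
            rw [blocks_add, blocks_add, hb1]
          have hdecomp : c = ([1] ++ blocks n s ++ [2]) ++
              (List.range' 3 (n - 2) ++ blocks n u ++ [2]) := by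
            rw [hc', hbsplit]; simp
          have hlenfst : ([1] ++ blocks n s ++ [2]).length = s * (n - 1) + 2 := by
            simp [blocks_length]
          have hrot : c.rotate (s * (n - 1) + 2) =
              (List.range' 3 (n - 2) ++ blocks n u ++ [2]) ++ ([1] ++ blocks n s ++ [2]) := by
            rw [hdecomp, ← hlenfst, List.rotate_append_length_eq]
          rw [hrot]
          have hxmem : x ∈ List.range' 3 (n - 2) := by
            rw [List.mem_range'_1]; omega
          have ha'sub : a'.Sublist (blocks n u) := by
            rw [hu]; exact sublist_blocks n a' (fun y hy => hba y (by simp [hy]))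
          have hasub : (x :: a').Sublist (List.range' 3 (n - 2) ++ blocks n u ++ [2]) := by
            rw [List.append_assoc]
            exact List.Sublist.append (l₁ := [x]) (List.singleton_sublist.2 hxmem)
              (ha'sub.trans (List.sublist_append_left _ _))
          have hbsub : b.Sublist (blocks n s ++ [2]) := by
            have := sublist_blocks_two n b hndb hbb h2b
            rwa [← hs] at this
          have : ((x :: a') ++ (1 :: b)).Sublist
              ((List.range' 3 (n - 2) ++ blocks n u ++ [2]) ++ (1 :: (blocks n s ++ [2]))) :=
            List.Sublist.append hasub (List.Sublist.cons₂ 1 hbsub)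
          simpa using this
  refine ⟨hros, ?_⟩
  apply Nat.sInf_le
  refine ⟨c, ?_, hros⟩
  have hclen : c.length = (n - 2) * (n - 1) + 2 := by
    rw [hc']
    simp [blocks_length]
  rw [hclen]
  obtain ⟨m, rfl⟩ : ∃ m, n = m + 2 := ⟨n - 2, by omega⟩
  have hsq : (m + 2) ^ 2 = m * m + 4 * m + 4 := by ring
  have hmul : (m + 2 - 2) * (m + 2 - 1) = m * m + m := by
    simp; ring
  omega
end

section
/- Let a₁,...,a_n be a permutation of {1,...,n} viewed as a cycle, with code c_i = H(a_{i+1} - a_i) (indices mod n, H the Heaviside step function) containing x ones at positions i₁ < ... < i_x and y = n - x zeros, and let λ_j denote the number of zeros between the j-th one and the (j+1)-st one (cyclically), so λ₁ + ... + λ_x = y. If there exist positive integers K, M and an index i with λ_{i+1} + λ_{i+2} + ... + λ_{i+K} ≥ y - M + 1 (indices of λ taken mod x), then the cycle a₁,...,a_n is a subsequence of the cycle (1,2,...,n) repeated (M-1) times, followed by (1,2,...,n-1), then (n,n-1,...,2,1) repeated (K-1) times, then (n,n-1,...,3,2). -/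
/-- The cyclic code of a cycle `a₁,...,aₙ`: entry `i` is `H(a_{i+1} - a_i)`
(indices mod `n`), where `H` is the Heaviside step function. -/
def cycCode (a : List ℕ) : List ℕ :=
  List.zipWith (fun u v => if v ≤ u then 1 else 0) (a.rotate 1) a

/-- The cyclic 0-1 sequence `1(0)^{λ₀} 1(0)^{λ₁} ⋯ 1(0)^{λ_{x-1}}`. -/
def codeOf (lam : ℕ → ℕ) (x : ℕ) : List ℕ :=
  ((List.range x).map (fun j => 1 :: List.replicate (lam j) 0)).flatten

lemma join_eq_flatten (l : List (List ℕ)) : l.flatten = l.flatten := rfl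

/-- linear code of adjacent pairs -/
def linCode : List ℕ → List ℕ
  | a :: b :: l => (if a ≤ b then 1 else 0) :: linCode (b :: l)
  | _ => []

@[simp] lemma linCode_nil : linCode [] = [] := rfl
@[simp] lemma linCode_single (a : ℕ) : linCode [a] = [] := rfl
lemma linCode_cons_cons (a b : ℕ) (l : List ℕ) :
    linCode (a :: b :: l) = (if a ≤ b then 1 else 0) :: linCode (b :: l) := rfl

lemma lin_split : ∀ (u : List ℕ) (a b : ℕ) (v : List ℕ),
    linCode ((u ++ [a]) ++ (b :: v)) =
      linCode (u ++ [a]) ++ (if a ≤ b then 1 else 0) :: linCode (b :: v)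
  | [], a, b, v => by simp [linCode_cons_cons]
  | c :: u', a, b, v => by
    have := lin_split u' a b v
    cases u' with
    | nil => simp_all [linCode_cons_cons]
    | cons d u'' => simp_all [linCode_cons_cons]

lemma zip_helper : ∀ (s : List ℕ) (a₀ a : ℕ),
    List.zipWith (fun u v => if v ≤ u then 1 else 0) (s ++ [a₀]) (a :: s) =
      linCode (a :: s) ++ [if s.getLastD a ≤ a₀ then 1 else 0]
  | [], a₀, a => by simp
  | c :: s', a₀, a => by
    have := zip_helper s' a₀ c
    have h2 : (c::s').getLast?.getD a = s'.getLast?.getD c := by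
      rw [← List.getLastD_eq_getLast?, ← List.getLastD_eq_getLast?, List.getLastD_cons]
    simp_all [linCode_cons_cons]

lemma cycCode_eq (a : ℕ) (s : List ℕ) :
    cycCode (a :: s) = linCode (a :: s) ++ [if s.getLastD a ≤ a then 1 else 0] := by
  have h1 : (a :: s).rotate 1 = s ++ [a] := by
    simpa using List.rotate_cons_succ s a 0
  rw [cycCode, h1, zip_helper]

lemma lin_rev_counts : ∀ (l : List ℕ), l.Chain' (· ≠ ·) →
    (linCode l.reverse).count 0 = (linCode l).count 1 ∧
    (linCode l.reverse).count 1 = (linCode l).count 0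
  | [], _ => by simp
  | [a], _ => by simp
  | a :: b :: t, h => by
    rw [List.Chain', List.isChain_cons_cons] at h
    obtain ⟨hab, hch⟩ := h
    obtain ⟨ih0, ih1⟩ := lin_rev_counts (b :: t) hch
    have hrev : (a :: b :: t).reverse = (t.reverse ++ [b]) ++ [a] := by simp
    have hsplit := lin_split t.reverse b a []
    have hrev2 : (b :: t).reverse = t.reverse ++ [b] := by simp
    rw [hrev2] at ih0 ih1
    rw [hrev, hsplit, linCode_cons_cons]
    simp only [List.count_append, List.count_cons, linCode_single]
    rcases le_or_gt a b with hle | hlt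
    · have : ¬ (b ≤ a) := by omega
      simp [hle, this, ih0, ih1]
    · have : ¬ (a ≤ b) := by omega
      have hba : b ≤ a := le_of_lt hlt
      simp [hba, this, ih0, ih1]

lemma list_sum_range (h : ℕ → ℕ) : ∀ k, ((List.range k).map h).sum = ∑ j ∈ Finset.range k, h j
  | 0 => by simp
  | k + 1 => by
    rw [List.range_succ, Finset.sum_range_succ, ← list_sum_range h k]
    simp

lemma pad_join (w : List ℕ) (c c' : ℕ) (h : c ≤ c') :
    (List.replicate c w).flatten.Sublist (List.replicate c' w).flatten := by
  have : c' = c + (c' - c) := by omega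
  rw [this, List.replicate_add, List.flatten_append]
  exact List.sublist_append_left _ _

lemma join_rep_comm (w : List ℕ) : ∀ c, (List.replicate c w).flatten ++ w = w ++ (List.replicate c w).flatten
  | 0 => by simp
  | c + 1 => by
    rw [List.replicate_succ, List.flatten_cons, List.append_assoc, join_rep_comm w c]

lemma rev_join_rep (w : List ℕ) : ∀ c, (List.replicate c w).flatten.reverse = (List.replicate c w.reverse).flatten
  | 0 => by simp
  | c + 1 => by
    rw [List.replicate_succ, List.flatten_cons, List.reverse_append, rev_join_rep w c,
      List.replicate_succ, List.flatten_cons, ← join_rep_comm]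

lemma mem_range1 {s n m : ℕ} : m ∈ List.range' s n ↔ s ≤ m ∧ m < s + n := by
  simp [List.mem_range']
  constructor
  · rintro ⟨i, hi, rfl⟩; omega
  · rintro ⟨h1, h2⟩; exact ⟨m - s, by omega, by omega⟩

lemma up_lemma (n : ℕ) : ∀ (l : List ℕ) (b f : ℕ),
    (∀ e ∈ b :: l, 1 ≤ e ∧ e ≤ n) → (b :: l).Chain' (· ≠ ·) → f ≤ b → 1 ≤ f →
    (b :: l).Sublist (List.range' f (n+1-f) ++
      (List.replicate ((linCode (b::l)).count 0) (List.range' 1 n)).flatten)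
  | [], b, f, hmem, _, hfb, hf => by
    have hb := hmem b (by simp)
    simp only [linCode_single, List.count_nil, List.replicate_zero, List.flatten_nil,
      List.append_nil]
    rw [List.singleton_sublist, mem_range1]
    omega
  | c :: l', b, f, hmem, hch, hfb, hf => by
    have hb := hmem b (by simp)
    have hc := hmem c (by simp)
    rw [List.Chain', List.isChain_cons_cons] at hch
    obtain ⟨hbc, hch'⟩ := hch
    have hmem' : ∀ e ∈ c :: l', 1 ≤ e ∧ e ≤ n := fun e he => hmem e (by simp [he])
    rw [linCode_cons_cons]
    rcases lt_or_ge b c with hlt | hle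
    · have hble : b ≤ c := le_of_lt hlt
      have IH := up_lemma n l' c (b+1) hmem' hch' hlt (by omega)
      have hsplit : List.range' f (n+1-f) = List.range' f (b+1-f) ++ List.range' (b+1) (n-b) := by
        have h := List.range'_append (s := f) (m := b+1-f) (n := n-b) (step := 1)
        rw [show f + 1*(b+1-f) = b+1 by omega, show (b+1-f)+(n-b) = n+1-f by omega] at h
        exact h.symm
      rw [hsplit, if_pos hble, List.append_assoc]
      have h1 : [b].Sublist (List.range' f (b+1-f)) := by
        rw [List.singleton_sublist, mem_range1]; omega
      have h2 := List.Sublist.append h1 IH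
      rw [show n+1-(b+1) = n-b by omega] at h2
      simpa using h2
    · have hcb : c < b := by omega
      have IH := up_lemma n l' c 1 hmem' hch' (by omega) (by omega)
      rw [if_neg (by omega)]
      have hcount : (0 :: linCode (c :: l')).count 0 = (linCode (c :: l')).count 0 + 1 := by
        simp [List.count_cons]
      rw [hcount, List.replicate_succ, List.flatten_cons]
      have h1 : [b].Sublist (List.range' f (n+1-f)) := by
        rw [List.singleton_sublist, mem_range1]; omega
      have h2 := List.Sublist.append h1 (by simpa using IH)
      simpa using h2

lemma down_lemma (n : ℕ) : ∀ (l : List ℕ) (b g : ℕ),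
    (∀ e ∈ b :: l, 1 ≤ e ∧ e ≤ n) → (b :: l).Chain' (· ≠ ·) → b ≤ g → g ≤ n →
    (b :: l).Sublist ((List.range' 1 g).reverse ++
      (List.replicate ((linCode (b::l)).count 1) ((List.range' 1 n).reverse)).flatten)
  | [], b, g, hmem, _, hbg, hg => by
    have hb := hmem b (by simp)
    simp only [linCode_single, List.count_nil, List.replicate_zero, List.flatten_nil,
      List.append_nil]
    rw [List.singleton_sublist, List.mem_reverse, mem_range1]
    omega
  | c :: l', b, g, hmem, hch, hbg, hg => by
    have hb := hmem b (by simp)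
    have hc := hmem c (by simp)
    rw [List.Chain', List.isChain_cons_cons] at hch
    obtain ⟨hbc, hch'⟩ := hch
    have hmem' : ∀ e ∈ c :: l', 1 ≤ e ∧ e ≤ n := fun e he => hmem e (by simp [he])
    rw [linCode_cons_cons]
    rcases lt_or_ge c b with hlt | hle
    · have IH := down_lemma n l' c (b-1) hmem' hch' (by omega) (by omega)
      have hsplit : List.range' 1 g = List.range' 1 (b-1) ++ List.range' b (g-b+1) := by
        have h := List.range'_append (s := 1) (m := b-1) (n := g-b+1) (step := 1)
        rw [show 1 + 1*(b-1) = b by omega, show (b-1)+(g-b+1) = g by omega] at h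
        exact h.symm
      rw [hsplit, if_neg (by omega), List.reverse_append, List.append_assoc]
      have h1 : [b].Sublist ((List.range' b (g-b+1)).reverse) := by
        rw [List.singleton_sublist, List.mem_reverse, mem_range1]; omega
      have h2 := List.Sublist.append h1 IH
      simpa using h2
    · have hblt : b < c := by omega
      have IH := down_lemma n l' c n hmem' hch' (by omega) (le_refl n)
      rw [if_pos (le_of_lt hblt)]
      have hcount : (1 :: linCode (c :: l')).count 1 = (linCode (c :: l')).count 1 + 1 := by
        simp [List.count_cons]
      rw [hcount, List.replicate_succ, List.flatten_cons]
      have h1 : [b].Sublist ((List.range' 1 g).reverse) := by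
        rw [List.singleton_sublist, List.mem_reverse, mem_range1]; omega
      have h2 := List.Sublist.append h1 (by simpa using IH)
      simpa using h2

lemma cycCode_length (l : List ℕ) : (cycCode l).length = l.length := by
  simp [cycCode]

lemma cycCode_rotate (l : List ℕ) (s : ℕ) :
    cycCode (l.rotate s) = (cycCode l).rotate s := by
  rcases eq_or_ne l [] with rfl | hne
  · simp [cycCode]
  have hlen : 0 < l.length := List.length_pos_iff.mpr hne
  apply List.ext_getElem
  · simp [cycCode_length]
  intro q h1 h2
  have hq : q < l.length := by simpa [cycCode_length] using h1
  rw [List.getElem_rotate]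
  simp only [cycCode_length]
  have hql : q % (cycCode l).length < (cycCode l).length ∧ (q + s) % (cycCode l).length < l.length := by
    constructor
    · exact Nat.mod_lt _ (by rwa [cycCode_length])
    · rw [cycCode_length]; exact Nat.mod_lt _ hlen
  have e1 : ∀ (m : List ℕ) (j : ℕ) (hj : j < (cycCode m).length) (hj2 : j < m.length)
      (hj3 : j < (m.rotate 1).length),
      (cycCode m)[j] = if m[j] ≤ (m.rotate 1)[j] then 1 else 0 := by
    intro m j hj hj2 hj3
    simp [cycCode, List.getElem_zipWith]
  rw [e1 l ((q+s) % l.length) (by rw [cycCode_length]; exact Nat.mod_lt _ hlen) (Nat.mod_lt _ hlen)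
      (by rw [List.length_rotate]; exact Nat.mod_lt _ hlen)]
  rw [e1 (l.rotate s) q (by rwa [cycCode_length, List.length_rotate]) (by rwa [List.length_rotate])
      (by rwa [List.length_rotate, List.length_rotate])]
  simp only [List.rotate_rotate, List.getElem_rotate]
  have hidx : ((q + s) % l.length + 1) % l.length = (q + (s + 1)) % l.length := by
    rw [Nat.mod_add_mod, Nat.add_assoc]
  simp only [hidx]

lemma blk_shift (mu : ℕ → ℕ) : ∀ (m s : ℕ),
    ((List.range' s m).map (fun j => 1 :: List.replicate (mu j) 0)).flatten ++ [1] =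
      1 :: ((List.range' s m).map (fun j => List.replicate (mu j) 0 ++ [1])).flatten
  | 0, s => by simp
  | m + 1, s => by
    rw [List.range'_succ]
    simp only [List.map_cons, List.flatten_cons, List.cons_append, List.append_assoc]
    rw [blk_shift mu m (s+1)]
    simp

lemma codeOf_rotate_one (mu : ℕ → ℕ) (x : ℕ) (hx : 0 < x) :
    (codeOf mu x).rotate 1 =
      ((List.range x).map (fun j => List.replicate (mu j) 0 ++ [1])).flatten := by
  have hr : List.range x = 0 :: List.range' 1 (x - 1) := by
    rw [List.range_eq_range']
    have : x = (x - 1) + 1 := by omega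
    rw [this, List.range'_succ]
    simp
  rw [codeOf, join_eq_flatten, hr]
  simp only [List.map_cons, List.flatten_cons]
  have hcons : (1 :: List.replicate (mu 0) 0) ++
      ((List.range' 1 (x-1)).map (fun j => 1 :: List.replicate (mu j) 0)).flatten =
      1 :: (List.replicate (mu 0) 0 ++
        ((List.range' 1 (x-1)).map (fun j => 1 :: List.replicate (mu j) 0)).flatten) := by simp
  rw [hcons]
  have hrot : ∀ (a : ℕ) (l : List ℕ), (a :: l).rotate 1 = l ++ [a] := by
    intro a l
    simpa using List.rotate_cons_succ l a 0
  rw [hrot, List.append_assoc, blk_shift]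
  simp

lemma length_codeOf (lam : ℕ → ℕ) (x : ℕ) :
    (codeOf lam x).length = x + ∑ l ∈ Finset.range x, lam l := by
  rw [codeOf, join_eq_flatten, List.length_flatten, List.map_map]
  have : ((List.range x).map (List.length ∘ fun j => 1 :: List.replicate (lam j) 0)) =
      (List.range x).map (fun j => lam j + 1) := by
    apply List.map_congr_left; intro a _; simp
  rw [this, list_sum_range]
  rw [Finset.sum_add_distrib]
  simp [Nat.add_comm]

lemma codeOf_rotate_block (lam : ℕ → ℕ) (x i₀ : ℕ) (h : i₀ < x) :
    (codeOf lam x).rotate (i₀ + ∑ l ∈ Finset.range i₀, lam l) =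
      codeOf (fun j => lam ((i₀ + j) % x)) x := by
  set blk : ℕ → List ℕ := fun j => 1 :: List.replicate (lam j) 0 with hblk
  set J1 := ((List.range i₀).map blk).flatten with hJ1
  set J2 := ((List.range' i₀ (x - i₀)).map blk).flatten with hJ2
  have hsplit : codeOf lam x = J1 ++ J2 := by
    rw [codeOf, join_eq_flatten, hJ1, hJ2, ← List.flatten_append, ← List.map_append]
    congr 2
    rw [List.range_eq_range', List.range_eq_range']
    have := List.range'_append (s := 0) (m := i₀) (n := x - i₀) (step := 1)
    simp only [Nat.one_mul, Nat.zero_add] at this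
    rw [this, show i₀ + (x - i₀) = x by omega]
  have hlen : J1.length = i₀ + ∑ l ∈ Finset.range i₀, lam l := by
    rw [hJ1, List.length_flatten, List.map_map]
    have : ((List.range i₀).map (List.length ∘ blk)) = (List.range i₀).map (fun j => lam j + 1) := by
      apply List.map_congr_left; intro a _; simp [hblk]
    rw [this, list_sum_range, Finset.sum_add_distrib]
    simp [Nat.add_comm]
  have hrot : (codeOf lam x).rotate (i₀ + ∑ l ∈ Finset.range i₀, lam l) = J2 ++ J1 := by
    rw [hsplit, ← hlen, List.rotate_eq_drop_append_take (by simp), List.drop_left, List.take_left]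
  rw [hrot]
  -- now show J2 ++ J1 = codeOf lam' x
  rw [codeOf, join_eq_flatten, List.range_eq_range']
  have hsplit2 : List.range' 0 x = List.range' 0 (x - i₀) ++ List.range' (x - i₀) i₀ := by
    have := List.range'_append (s := 0) (m := x - i₀) (n := i₀) (step := 1)
    simp only [Nat.one_mul, Nat.zero_add] at this
    rw [this, show x - i₀ + i₀ = x by omega]
  rw [hsplit2, List.map_append, List.flatten_append]
  congr 1
  · -- first chunk = J2
    have hc : ((List.range' 0 (x - i₀)).map fun j => 1 :: List.replicate (lam ((i₀ + j) % x)) 0) =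
        (List.range' 0 (x - i₀)).map (fun j => blk (i₀ + j)) := by
      apply List.map_congr_left
      intro a ha
      rw [mem_range1] at ha
      rw [Nat.mod_eq_of_lt (by omega)]
    rw [hc, hJ2, List.range'_eq_map_range (s := i₀) (n := x - i₀), List.map_map]
    have : List.range' 0 (x - i₀) = List.range (x - i₀) := by
      rw [List.range_eq_range']
    rw [this]
    rfl
  · -- second chunk = J1
    have hc : ((List.range' (x - i₀) i₀).map fun j => 1 :: List.replicate (lam ((i₀ + j) % x)) 0) =
        (List.range' (x - i₀) i₀).map (fun j => blk (i₀ + j - x)) := by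
      apply List.map_congr_left
      intro a ha
      rw [mem_range1] at ha
      have h1 : x ≤ i₀ + a := by omega
      have h2 : (i₀ + a) % x = i₀ + a - x := by
        rw [Nat.mod_eq_sub_mod h1, Nat.mod_eq_of_lt (by omega)]
      rw [h2]
    rw [hc, hJ1, List.range'_eq_map_range (s := x - i₀) (n := i₀), List.map_map]
    congr 1
    apply List.map_congr_left
    intro a ha
    simp only [Function.comp_apply]
    congr 1
    simp at ha
    omega

lemma sum_shift (lam : ℕ → ℕ) (x i₀ : ℕ) (h : i₀ < x) :
    ∑ j ∈ Finset.range x, lam ((i₀ + j) % x) = ∑ j ∈ Finset.range x, lam j := by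
  have hsplit : ∑ j ∈ Finset.Ico 0 (x - i₀), lam ((i₀ + j) % x) +
      ∑ j ∈ Finset.Ico (x - i₀) x, lam ((i₀ + j) % x) =
      ∑ j ∈ Finset.Ico 0 x, lam ((i₀ + j) % x) :=
    Finset.sum_Ico_consecutive _ (by omega) (by omega)
  rw [Finset.range_eq_Ico, ← hsplit]
  have h1 : ∑ j ∈ Finset.Ico 0 (x - i₀), lam ((i₀ + j) % x) = ∑ j ∈ Finset.Ico i₀ x, lam j := by
    rw [Finset.sum_Ico_eq_sum_range, Finset.sum_Ico_eq_sum_range]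
    apply Finset.sum_congr rfl
    intro j hj
    simp only [Finset.mem_range] at hj
    rw [show (0 : ℕ) + j = j by omega, show x - i₀ - 0 = x - i₀ by omega] at *
    rw [Nat.mod_eq_of_lt (by omega)]
  have h2 : ∑ j ∈ Finset.Ico (x - i₀) x, lam ((i₀ + j) % x) = ∑ j ∈ Finset.Ico 0 i₀, lam j := by
    rw [Finset.sum_Ico_eq_sum_range, Finset.sum_Ico_eq_sum_range,
      show x - (x - i₀) = i₀ by omega]
    simp only [Nat.sub_zero, Nat.zero_add]
    apply Finset.sum_congr rfl
    intro j hj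
    simp only [Finset.mem_range] at hj
    rw [show i₀ + (x - i₀ + j) = j + x by omega, Nat.add_mod_right, Nat.mod_eq_of_lt (by omega)]
  rw [h1, h2, add_comm]
  exact Finset.sum_Ico_consecutive _ (by omega) (by omega)

lemma unrot {α : Type*} (u W : List α) (s j : ℕ) (h : (u.rotate s).Sublist (W.rotate j)) :
    ∃ j', u.Sublist (W.rotate j') := by
  rcases eq_or_ne u [] with rfl | hne
  · exact ⟨j, List.nil_sublist _⟩
  have hlen : 0 < u.length := List.length_pos_iff.mpr hne
  have hs' : s % u.length ≤ u.length := le_of_lt (Nat.mod_lt _ hlen)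
  rw [← List.rotate_mod, List.rotate_eq_drop_append_take hs'] at h
  obtain ⟨w1, w2, hW, h1, h2⟩ := List.append_sublist_iff.mp h
  refine ⟨j + w1.length, ?_⟩
  have hu : u = u.take (s % u.length) ++ u.drop (s % u.length) := (List.take_append_drop _ _).symm
  have hrot : W.rotate (j + w1.length) = w2 ++ w1 := by
    rw [← List.rotate_rotate, hW, List.rotate_eq_drop_append_take (by simp), List.drop_left,
      List.take_left]
  rw [hrot, hu]
  exact List.Sublist.append h2 h1

lemma linCode_length : ∀ (l : List ℕ), (linCode l).length = l.length - 1
  | [] => rfl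
  | [_] => rfl
  | a :: b :: l => by
    rw [linCode_cons_cons]
    have := linCode_length (b :: l)
    simp_all

lemma embed_desc (n K : ℕ) (Cu : List ℕ) (ca : ℕ) (hca : 2 ≤ ca)
    (hmem : ∀ e ∈ ca :: Cu, 1 ≤ e ∧ e ≤ n) (hch : (ca :: Cu).Chain' (· ≠ ·)) (hn : 1 < n)
    (hcnt : (linCode (ca :: Cu)).count 0 ≤ K - 1) :
    ((ca :: Cu).reverse).Sublist
      ((List.replicate (K - 1) (List.range' 1 n).reverse).flatten ++
        (List.range' 2 (n - 1)).reverse) := by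
  have hb := hmem ca (by simp)
  have h := up_lemma n Cu ca 2 hmem hch hca (by omega)
  have hpad : (List.range' 2 (n+1-2) ++
      (List.replicate ((linCode (ca :: Cu)).count 0) (List.range' 1 n)).flatten).Sublist
      (List.range' 2 (n+1-2) ++
      (List.replicate (K - 1) (List.range' 1 n)).flatten) :=
    List.Sublist.append (List.Sublist.refl _) (pad_join _ _ _ hcnt)
  have h2 := (h.trans hpad).reverse
  rw [List.reverse_append, rev_join_rep, show n + 1 - 2 = n - 1 by omega] at h2
  exact h2

lemma embed_asc (n M : ℕ) (Bu : List ℕ) (b0 : ℕ) (hb0 : b0 ≤ n - 1)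
    (hmem : ∀ e ∈ b0 :: Bu, 1 ≤ e ∧ e ≤ n) (hch : (b0 :: Bu).Chain' (· ≠ ·)) (hn : 1 < n)
    (hcnt : (linCode (b0 :: Bu)).count 1 ≤ M - 1) :
    ((b0 :: Bu).reverse).Sublist
      ((List.replicate (M - 1) (List.range' 1 n)).flatten ++ List.range' 1 (n - 1)) := by
  have h := down_lemma n Bu b0 (n-1) hmem hch hb0 (by omega)
  have hpad : ((List.range' 1 (n-1)).reverse ++
      (List.replicate ((linCode (b0 :: Bu)).count 1) ((List.range' 1 n).reverse)).flatten).Sublist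
      ((List.range' 1 (n-1)).reverse ++
      (List.replicate (M - 1) ((List.range' 1 n).reverse)).flatten) :=
    List.Sublist.append (List.Sublist.refl _) (pad_join _ _ _ hcnt)
  have h2 := (h.trans hpad).reverse
  rw [List.reverse_append, rev_join_rep, List.reverse_reverse, List.reverse_reverse] at h2
  exact h2

lemma cnt1_blocks (lam : ℕ → ℕ) : ∀ (u : List ℕ),
    ((u.map (fun j => List.replicate (lam j) 0 ++ [1])).flatten).count 1 = u.length
  | [] => by simp
  | a :: u => by
    simp only [List.map_cons, List.flatten_cons, List.count_append, cnt1_blocks lam u]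
    simp [List.count_replicate]
    omega

lemma cnt0_blocks (lam : ℕ → ℕ) : ∀ (u : List ℕ),
    ((u.map (fun j => List.replicate (lam j) 0 ++ [1])).flatten).count 0 = (u.map lam).sum
  | [] => by simp
  | a :: u => by
    simp only [List.map_cons, List.flatten_cons, List.count_append, cnt0_blocks lam u]
    simp [List.count_replicate]

lemma len_blocks (lam : ℕ → ℕ) : ∀ (u : List ℕ),
    ((u.map (fun j => List.replicate (lam j) 0 ++ [1])).flatten).length = (u.map lam).sum + u.length
  | [] => by simp
  | a :: u => by
    simp only [List.map_cons, List.flatten_cons, List.length_append, len_blocks lam u]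
    simp
    omega

theorem aux_embed (n x y K M : ℕ) (hn : 1 < n) (hx : 0 < x) (hK : 0 < K) (hM : 0 < M)
    (hxy : x + y = n) (g : List ℕ) (hg : g.Perm (List.range' 1 n))
    (lam : ℕ → ℕ) (hlam : ∑ j ∈ Finset.range x, lam j = y)
    (hcode : cycCode g = ((List.range x).map (fun j => List.replicate (lam j) 0 ++ [1])).flatten)
    (hS : y ≤ M - 1 + ∑ j ∈ Finset.range (min K x), lam j) :
    g.Sublist (((List.replicate (K - 1) (List.range' 1 n).reverse).flatten ++
        (List.range' 2 (n - 1)).reverse) ++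
      ((List.replicate (M - 1) (List.range' 1 n)).flatten ++ List.range' 1 (n - 1))) := by
  set D := (List.replicate (K - 1) (List.range' 1 n).reverse).flatten ++
      (List.range' 2 (n - 1)).reverse with hD
  set A := (List.replicate (M - 1) (List.range' 1 n)).flatten ++ List.range' 1 (n - 1) with hA
  set k := min K x with hk
  set S := ∑ j ∈ Finset.range k, lam j with hSdef
  have hk1 : 1 ≤ k := by omega
  have hkx : k ≤ x := by omega
  set m := k + S with hm
  have hmem : ∀ e ∈ g, 1 ≤ e ∧ e ≤ n := by
    intro e he
    have := hg.mem_iff.mp he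
    rw [mem_range1] at this
    omega
  have hnd : g.Nodup := hg.nodup_iff.mpr List.nodup_range'
  have hglen : g.length = n := by rw [hg.length_eq]; simp
  have h1A : (1 : ℕ) ∈ A := by
    rw [hA, List.mem_append, mem_range1]
    right; omega
  -- R structure
  set blkf : ℕ → List ℕ := fun j => List.replicate (lam j) 0 ++ [1] with hblkf
  set R₁ := ((List.range k).map blkf).flatten with hR₁
  set R₂ := ((List.range' k (x - k)).map blkf).flatten with hR₂
  have hR : ((List.range x).map blkf).flatten = R₁ ++ R₂ := by
    rw [hR₁, hR₂, ← List.flatten_append, ← List.map_append]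
    congr 2
    rw [List.range_eq_range', List.range_eq_range']
    have := List.range'_append (s := 0) (m := k) (n := x - k) (step := 1)
    simp only [Nat.one_mul, Nat.zero_add] at this
    rw [this, show k + (x - k) = x by omega]
  have hR1len : R₁.length = m := by
    rw [hR₁, len_blocks, list_sum_range]
    simp [hm, hSdef, Nat.add_comm]
  have hRlen : R₁.length + R₂.length = n := by
    have h := cycCode_length g
    rw [hcode, hR, hglen, List.length_append] at h
    omega
  have hy2 : S + R₂.count 0 = y := by
    rw [hR₂, cnt0_blocks, List.range'_eq_map_range, List.map_map, list_sum_range]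
    have h2 : ∑ j ∈ Finset.range (x - k), (lam ∘ fun x => k + x) j = ∑ j ∈ Finset.Ico k x, lam j := by
      rw [Finset.sum_Ico_eq_sum_range]
      rfl
    rw [h2, hSdef]
    have h3 : ∑ j ∈ Finset.range k, lam j = ∑ j ∈ Finset.Ico 0 k, lam j := by
      rw [Finset.range_eq_Ico]
    rw [h3, Finset.sum_Ico_consecutive _ (by omega) (by omega), ← Finset.range_eq_Ico, hlam]
  have hR2cnt : R₂.count 0 ≤ M - 1 := by omega
  have hSy : S ≤ y := by omega
  have hmn : m ≤ n := by omega
  -- R₁ = R₁' ++ [1]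
  set R₁' := ((List.range (k-1)).map blkf).flatten ++ List.replicate (lam (k-1)) 0 with hR₁'
  have hR1split : R₁ = R₁' ++ [1] := by
    rw [hR₁, hR₁', show k = (k-1)+1 by omega, List.range_succ, List.map_append,
      List.flatten_append]
    simp [hblkf]
  have hR1'cnt : R₁'.count 1 = k - 1 := by
    rw [hR₁', List.count_append, cnt1_blocks, List.count_replicate]
    simp
  have hR1'len : R₁'.length = m - 1 := by
    have : R₁.length = R₁'.length + 1 := by rw [hR1split]; simp
    omega
  -- decompose g
  set C := g.take m with hC
  set B := g.drop m with hB
  have hCB : g = C ++ B := (List.take_append_drop m g).symm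
  have hClen : C.length = m := by rw [hC, List.length_take]; omega
  have hBlen : B.length = n - m := by rw [hB, List.length_drop]; omega
  have hCne : C ≠ [] := by
    intro h
    rw [h] at hClen
    simp at hClen
    omega
  have hndCB : (C ++ B).Nodup := hCB ▸ hnd
  rw [List.nodup_append] at hndCB
  obtain ⟨hndC, hndB, hdisj⟩ := hndCB
  have hmemC : ∀ e ∈ C, 1 ≤ e ∧ e ≤ n := fun e he => hmem e (hCB ▸ List.mem_append_left _ he)
  have hmemB : ∀ e ∈ B, 1 ≤ e ∧ e ≤ n := fun e he => hmem e (hCB ▸ List.mem_append_right _ he)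
  obtain ⟨ca, Cu, hCr⟩ : ∃ ca Cu, C.reverse = ca :: Cu := by
    cases hCr : C.reverse with
    | nil => exact absurd (by simpa using congrArg List.reverse hCr) hCne
    | cons a u => exact ⟨a, u, rfl⟩
  have hCdecomp : C = Cu.reverse ++ [ca] := by
    rw [← List.reverse_reverse C, hCr]; simp
  have hchCrev : (ca :: Cu).Chain' (· ≠ ·) := by
    rw [← hCr]
    exact List.Pairwise.isChain (List.nodup_reverse.mpr hndC)
  have hchC : C.Chain' (· ≠ ·) := List.Pairwise.isChain hndC
  have hmemCrev : ∀ e ∈ ca :: Cu, 1 ≤ e ∧ e ≤ n := by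
    intro e he
    exact hmemC e (by rw [← List.mem_reverse, hCr]; exact he)
  have hcaC : ca ∈ C := by rw [← List.mem_reverse, hCr]; simp
  have hca1 : 1 ≤ ca := (hmemC ca hcaC).1
  -- case on B
  rcases hBcase : B with _ | ⟨bh, Bt⟩
  · -- B = []
    have hmeqn : m = n := by
      rw [hBcase] at hBlen
      simp at hBlen
      omega
    have hgC : g = C := by rw [hCB, hBcase]; simp
    have hR2nil : R₂ = [] := by
      have : R₂.length = 0 := by omega
      exact List.length_eq_zero_iff.mp this
    -- linCode g = R₁'
    obtain ⟨gh, gt, hg0⟩ : ∃ gh gt, g = gh :: gt := by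
      cases g with
      | nil => simp at hglen; omega
      | cons a l => exact ⟨a, l, rfl⟩
    have hcyc := cycCode_eq gh gt
    rw [← hg0, hcode, hR, hR2nil, List.append_nil, hR1split] at hcyc
    have hlin : linCode g = R₁' := by
      have hlenlin : (linCode g).length = R₁'.length := by
        rw [linCode_length, hg0, hR1'len]
        simp [hg0] at hglen ⊢
        omega
      exact (List.append_inj hcyc.symm hlenlin).1
    have hcntC : (linCode C).count 1 ≤ K - 1 := by
      rw [← hgC, hlin, hR1'cnt]
      omega
    -- embed
    rcases le_or_gt 2 ca with hca2 | hca2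
    · have hcnt0 : (linCode (ca :: Cu)).count 0 ≤ K - 1 := by
        rw [← hCr, (lin_rev_counts C hchC).1]
        exact hcntC
      have hemb := embed_desc n K Cu ca hca2 hmemCrev hchCrev hn hcnt0
      rw [← hCr, List.reverse_reverse] at hemb
      rw [hgC]
      exact hemb.trans (List.sublist_append_left _ _)
    · have hca1' : ca = 1 := by omega
      cases Cu with
      | nil =>
        -- C = [1], g = C, n ≥ 2 contradiction
        have : C.length = 1 := by
          rw [hCdecomp]; simp
        omega
      | cons c1 Cu' =>
        have hc1ne : c1 ≠ 1 := by
          have hrev := List.nodup_reverse.mpr hndC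
          rw [hCr, hca1'] at hrev
          intro h
          rw [h] at hrev
          simp at hrev
        have hc12 : 2 ≤ c1 := by
          have := (hmemCrev c1 (by simp)).1
          omega
        have hchtail : (c1 :: Cu').Chain' (· ≠ ·) :=
          (List.isChain_cons_cons.mp hchCrev).2
        have hmemtail : ∀ e ∈ c1 :: Cu', 1 ≤ e ∧ e ≤ n := by
          intro e he
          exact hmemCrev e (by simp [he])
        have hcnt0 : (linCode (c1 :: Cu')).count 0 ≤ K - 1 := by
          have h0 : (linCode (ca :: c1 :: Cu')).count 0 ≤ K - 1 := by
            rw [← hCr, (lin_rev_counts C hchC).1]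
            exact hcntC
          rw [linCode_cons_cons, List.count_cons] at h0
          omega
        have hemb := embed_desc n K Cu' c1 hc12 hmemtail hchtail hn hcnt0
        rw [hgC, hCdecomp, hca1']
        exact List.Sublist.append hemb (List.singleton_sublist.mpr h1A)
  · -- B = bh :: Bt nonempty
    have hBne : B ≠ [] := by rw [hBcase]; simp
    have hmln : m < n := by
      have : B.length ≥ 1 := by rw [hBcase]; simp
      omega
    have hkltx : k < x := by
      rcases Nat.lt_or_ge k x with h | h
      · exact h
      · exfalso
        have hkx2 : k = x := by omega
        have : S = y := by rw [hSdef, hkx2, hlam]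
        omega
    -- R₂ = Z ++ [1]
    set Z := ((List.range' k (x - k - 1)).map blkf).flatten ++ List.replicate (lam (x-1)) 0
      with hZ
    have hR2split : R₂ = Z ++ [1] := by
      rw [hR₂, hZ]
      have hr : List.range' k (x - k) = List.range' k (x - k - 1) ++ [x - 1] := by
        have h := List.range'_append (s := k) (m := x - k - 1) (n := 1) (step := 1)
        rw [show k + 1 * (x - k - 1) = x - 1 by omega] at h
        rw [show (x - k - 1) + (1 : ℕ) = x - k by omega] at h
        rw [← h, List.range'_one]
      rw [hr, List.map_append, List.flatten_append]
      simp [hblkf]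
    have hZcnt : R₂.count 0 = Z.count 0 := by
      rw [hR2split, List.count_append]
      have h1 : List.count 0 [1] = 0 := by simp
      omega
    have hZlen : Z.length = R₂.length - 1 := by
      rw [hR2split]; simp
    -- wrap and linCode decomposition
    obtain ⟨gh, gt, hg0⟩ : ∃ gh gt, g = gh :: gt := by
      cases g with
      | nil => simp at hglen; omega
      | cons a l => exact ⟨a, l, rfl⟩
    set w := if gt.getLastD gh ≤ gh then (1:ℕ) else 0 with hw
    have hcyc : linCode g ++ [w] = (R₁' ++ [1]) ++ (Z ++ [1]) := by
      have := cycCode_eq gh gt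
      rw [← hg0] at this
      rw [← hw] at this
      rw [← this, hcode, hR, hR1split, hR2split]
    have hlinsplit : linCode g = linCode C ++ (if ca ≤ bh then (1:ℕ) else 0) :: linCode B := by
      rw [hCB, hCdecomp, hBcase]
      exact lin_split Cu.reverse ca bh Bt
    set e := if ca ≤ bh then (1:ℕ) else 0 with he
    have hassoc : (linCode C ++ [e]) ++ (linCode B ++ [w]) = (R₁' ++ [1]) ++ (Z ++ [1]) := by
      rw [← hcyc, hlinsplit]
      simp
    have hlenCe : (linCode C ++ [e]).length = (R₁' ++ [1]).length := by
      rw [List.length_append, List.length_append, linCode_length, hClen, hR1'len]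
      simp
    obtain ⟨hEqC, hEqB⟩ := List.append_inj hassoc hlenCe
    have hlinC : linCode C = R₁' := (List.append_inj' hEqC (by simp)).1
    have hwZ : linCode B = Z ∧ [w] = [1] := List.append_inj' hEqB (by simp)
    have hlinB : linCode B = Z := hwZ.1
    have hw1 : w = 1 := by simpa using hwZ.2
    have hcntC : (linCode C).count 1 = k - 1 := by rw [hlinC, hR1'cnt]
    have hcntB : (linCode B).count 0 ≤ M - 1 := by
      rw [hlinB, ← hZcnt]
      exact hR2cnt
    -- B reverse decomposition
    obtain ⟨b0, Bu, hBr⟩ : ∃ b0 Bu, B.reverse = b0 :: Bu := by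
      cases hBr : B.reverse with
      | nil => exact absurd (by simpa using congrArg List.reverse hBr) hBne
      | cons a u => exact ⟨a, u, rfl⟩
    have hBdecomp : B = Bu.reverse ++ [b0] := by
      rw [← List.reverse_reverse B, hBr]; simp
    have hmemBrev : ∀ e' ∈ b0 :: Bu, 1 ≤ e' ∧ e' ≤ n := by
      intro e' he'
      exact hmemB e' (by rw [← List.mem_reverse, hBr]; exact he')
    have hchBrev : (b0 :: Bu).Chain' (· ≠ ·) := by
      rw [← hBr]
      exact List.Pairwise.isChain (List.nodup_reverse.mpr hndB)
    have hchB : B.Chain' (· ≠ ·) := List.Pairwise.isChain hndB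
    -- b0 ≤ n - 1
    have hb0mem : b0 ∈ B := by rw [← List.mem_reverse, hBr]; simp
    have hb0 : b0 ≤ n - 1 := by
      have hlast : g.getLast? = some b0 := by
        rw [hCB, hBdecomp, ← List.append_assoc]
        exact List.getLast?_concat
      have hlast2 : g.getLast? = some (gt.getLast?.getD gh) := by
        rw [hg0]
        exact List.getLast?_cons
      have hb0gt : gt.getLastD gh = b0 := by
        rw [hlast] at hlast2
        rw [List.getLastD_eq_getLast?]
        exact (Option.some.inj hlast2).symm
      have hble : b0 ≤ gh := by
        have hif : (if gt.getLastD gh ≤ gh then (1:ℕ) else 0) = 1 := by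
          rw [← hw]; exact hw1
        by_contra hc
        rw [if_neg (by omega)] at hif
        · simp at hif
      have hghn : gh ≤ n := (hmem gh (by rw [hg0]; simp)).2
      have hbne : b0 ≠ gh := by
        obtain ⟨ch, Ct, hC0⟩ : ∃ ch Ct, C = ch :: Ct := List.exists_cons_of_ne_nil hCne
        have hggg : gh :: gt = ch :: (Ct ++ B) := by
          rw [← hg0, hCB, hC0]; simp
        have hgt : gt = Ct ++ B := (List.cons.injEq _ _ _ _).mp hggg |>.2
        have hb0gt' : b0 ∈ gt := by rw [hgt]; exact List.mem_append_right _ hb0mem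
        have : gh ∉ gt := by
          have := hnd
          rw [hg0, List.nodup_cons] at this
          exact this.1
        intro hcc
        exact this (hcc ▸ hb0gt')
      omega
    -- embeddings
    rcases le_or_gt 2 ca with hca2 | hca2
    · have hcnt0 : (linCode (ca :: Cu)).count 0 ≤ K - 1 := by
        rw [← hCr, (lin_rev_counts C hchC).1, hcntC]
        omega
      have hembC := embed_desc n K Cu ca hca2 hmemCrev hchCrev hn hcnt0
      rw [← hCr, List.reverse_reverse] at hembC
      have hcnt1 : (linCode (b0 :: Bu)).count 1 ≤ M - 1 := by
        rw [← hBr, (lin_rev_counts B hchB).2]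
        exact hcntB
      have hembB := embed_asc n M Bu b0 hb0 hmemBrev hchBrev hn hcnt1
      rw [← hBr, List.reverse_reverse] at hembB
      rw [hCB]
      exact List.Sublist.append hembC hembB
    · have hca1' : ca = 1 := by omega
      -- 1 ∉ B
      have h1nB : (1:ℕ) ∉ B := fun h => hdisj 1 (hca1' ▸ hcaC) 1 h rfl
      have hnd1B : (1 :: B).Nodup := List.nodup_cons.mpr ⟨h1nB, hndB⟩
      have hch1B : (1 :: B).Chain' (· ≠ ·) := List.Pairwise.isChain hnd1B
      have hch1Brev : ((1 :: B).reverse).Chain' (· ≠ ·) :=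
        List.Pairwise.isChain (List.nodup_reverse.mpr hnd1B)
      have h1Brev : (1 :: B).reverse = b0 :: (Bu ++ [1]) := by
        rw [List.reverse_cons, hBr]
        simp
      have hcnt1 : (linCode (b0 :: (Bu ++ [1]))).count 1 ≤ M - 1 := by
        rw [← h1Brev, (lin_rev_counts (1 :: B) hch1B).2]
        have : linCode (1 :: B) = 1 :: linCode B := by
          rw [hBcase, linCode_cons_cons, if_pos (hmemB bh (by rw [hBcase]; simp)).1]
        rw [this, List.count_cons]
        simpa using hcntB
      have hmem1Brev : ∀ e' ∈ b0 :: (Bu ++ [1]), 1 ≤ e' ∧ e' ≤ n := by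
        intro e' he'
        have : e' ∈ (1 :: B).reverse := by rw [h1Brev]; exact he'
        rw [List.mem_reverse] at this
        rcases List.mem_cons.mp this with h | h
        · omega
        · exact hmemB e' h
      rw [h1Brev] at hch1Brev
      have hembB := embed_asc n M (Bu ++ [1]) b0 hb0 hmem1Brev hch1Brev hn hcnt1
      rw [← h1Brev, List.reverse_reverse] at hembB
      -- C side
      have hgsplit : g = Cu.reverse ++ (1 :: B) := by
        rw [hCB, hCdecomp, hca1', List.append_assoc]
        rfl
      cases Cu with
      | nil =>
        rw [hgsplit]
        have : ([] : List ℕ).reverse ++ (1 :: B) = [] ++ (1 :: B) := by simp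
        rw [this]
        exact List.Sublist.append (List.nil_sublist _) hembB
      | cons c1 Cu' =>
        have hc1ne : c1 ≠ 1 := by
          have hrev := List.nodup_reverse.mpr hndC
          rw [hCr, hca1'] at hrev
          intro h
          rw [h] at hrev
          simp at hrev
        have hc12 : 2 ≤ c1 := by
          have := (hmemCrev c1 (by simp)).1
          omega
        have hchtail : (c1 :: Cu').Chain' (· ≠ ·) :=
          (List.isChain_cons_cons.mp hchCrev).2
        have hmemtail : ∀ e' ∈ c1 :: Cu', 1 ≤ e' ∧ e' ≤ n := by
          intro e' he'
          exact hmemCrev e' (by simp [he'])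
        have hcnt0 : (linCode (c1 :: Cu')).count 0 ≤ K - 1 := by
          have h0 : (linCode (ca :: c1 :: Cu')).count 0 = k - 1 := by
            rw [← hCr, (lin_rev_counts C hchC).1, hcntC]
          rw [linCode_cons_cons, List.count_cons] at h0
          omega
        have hembC := embed_desc n K Cu' c1 hc12 hmemtail hchtail hn hcnt0
        rw [hgsplit]
        exact List.Sublist.append hembC hembB

theorem lemma_one (n x y K M : ℕ) (hn : 1 < n) (hx : 0 < x) (hK : 0 < K) (hM : 0 < M)
    (hxy : x + y = n) (a : List ℕ) (ha : a.Perm (List.range' 1 n))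
    (lam : ℕ → ℕ) (hlam : ∑ j ∈ Finset.range x, lam j = y)
    (r : ℕ) (hcode : cycCode (a.rotate r) = codeOf lam x)
    (i : ℕ) (hi : y + 1 ≤ M + ∑ j ∈ Finset.range K, lam ((i + 1 + j) % x)) :
    ∃ j, a.Sublist
      (((List.replicate (M - 1) (List.range' 1 n)).flatten ++ List.range' 1 (n - 1) ++
        (List.replicate (K - 1) (List.range' 1 n).reverse).flatten ++
        (List.range' 2 (n - 1)).reverse).rotate j) := by
  set i₀ := (i + 1) % x with hi₀
  have hi₀x : i₀ < x := Nat.mod_lt _ hx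
  set t := i₀ + ∑ l ∈ Finset.range i₀, lam l with ht
  set lam' : ℕ → ℕ := fun j => lam ((i₀ + j) % x) with hlam'
  set g := a.rotate (r + (t + 1)) with hgdef
  have hgrot : g = (a.rotate r).rotate (t + 1) := by rw [hgdef, List.rotate_rotate]
  have hcode' : cycCode g =
      ((List.range x).map (fun j => List.replicate (lam' j) 0 ++ [1])).flatten := by
    rw [hgrot, cycCode_rotate, hcode, ← List.rotate_rotate,
      codeOf_rotate_block lam x i₀ hi₀x, codeOf_rotate_one _ x hx]
  have hperm : g.Perm (List.range' 1 n) := (List.rotate_perm _ _).trans ha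
  have hlam'sum : ∑ j ∈ Finset.range x, lam' j = y := by
    rw [hlam']
    exact (sum_shift lam x i₀ hi₀x).trans hlam
  have hSmain : y ≤ M - 1 + ∑ j ∈ Finset.range (min K x), lam' j := by
    rcases le_or_gt K x with hKx | hKx
    · rw [min_eq_left hKx]
      have hcongr : ∑ j ∈ Finset.range K, lam' j =
          ∑ j ∈ Finset.range K, lam ((i + 1 + j) % x) := by
        apply Finset.sum_congr rfl
        intro j _
        rw [hlam']
        simp only []
        rw [hi₀, Nat.mod_add_mod]
      omega
    · rw [min_eq_right (le_of_lt hKx), hlam'sum]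
      omega
  have hemb := aux_embed n x y K M hn hx hK hM hxy g hperm lam' hlam'sum hcode' hSmain
  set A := (List.replicate (M - 1) (List.range' 1 n)).flatten ++ List.range' 1 (n - 1) with hA
  set D := (List.replicate (K - 1) (List.range' 1 n).reverse).flatten ++
      (List.range' 2 (n - 1)).reverse with hD
  have hrot : (A ++ D).rotate A.length = D ++ A := by
    rw [List.rotate_eq_drop_append_take (by simp), List.drop_left, List.take_left]
  have hsub : (a.rotate (r + (t + 1))).Sublist ((A ++ D).rotate A.length) := by
    rw [hrot]
    exact hemb
  obtain ⟨j', hj'⟩ := unrot a (A ++ D) (r + (t + 1)) A.length hsub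
  refine ⟨j', ?_⟩
  have hL : (List.replicate (M - 1) (List.range' 1 n)).flatten ++ List.range' 1 (n - 1) ++
        (List.replicate (K - 1) (List.range' 1 n).reverse).flatten ++
        (List.range' 2 (n - 1)).reverse = A ++ D := by
    rw [hA, hD, join_eq_flatten, join_eq_flatten]
    simp [List.append_assoc]
  rw [hL]
  exact hj'
end
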